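/- arXiv:1101.0068 — 4 statements merged into one kernel-verified Lean document; each statement's English description precedes it below -/
import Mathlib

section
/- Let A be a diagonalizable complex d×d matrix A = U D U^{-1} with D diagonal and eigenvalues with strictly negative real parts. Then j(e^{As}) ≥ ϑ e^{-τ s} for all s ≥ 0, where ϑ = j(U) j(U^{-1}), τ = -min{Re(λ) : λ ∈ σ(A)}, and j(Z) = min_{||x||=1} ||Zx||. -/
open Matrix

/-- The modulus of injectivity `j(Z) = min_{‖x‖=1} ‖Z x‖` of a complex matrix. -/
noncomputable def modulusOfInjectivityC {d : ℕ} (Z : Matrix (Fin d) (Fin d) ℂ) : ℝ :=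
  sInf ((fun x : EuclideanSpace ℂ (Fin d) => ‖Matrix.toEuclideanCLM (𝕜 := ℂ) Z x‖) ''
    {x : EuclideanSpace ℂ (Fin d) | ‖x‖ = 1})

namespace MOIaux

variable {d : ℕ}

lemma bdd (Z : Matrix (Fin d) (Fin d) ℂ) :
    BddBelow ((fun x : EuclideanSpace ℂ (Fin d) => ‖Matrix.toEuclideanCLM (𝕜 := ℂ) Z x‖) ''
      {x : EuclideanSpace ℂ (Fin d) | ‖x‖ = 1}) := by
  refine ⟨0, ?_⟩
  rintro r ⟨x, -, rfl⟩
  positivity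

lemma nonneg (Z : Matrix (Fin d) (Fin d) ℂ) : 0 ≤ modulusOfInjectivityC Z := by
  apply Real.sInf_nonneg
  rintro r ⟨x, -, rfl⟩
  positivity

lemma le_norm (Z : Matrix (Fin d) (Fin d) ℂ) (y : EuclideanSpace ℂ (Fin d)) :
    modulusOfInjectivityC Z * ‖y‖ ≤ ‖Matrix.toEuclideanCLM (𝕜 := ℂ) Z y‖ := by
  rcases eq_or_ne y 0 with rfl | hy
  · simp
  · have hny : (0:ℝ) < ‖y‖ := norm_pos_iff.mpr hy
    set c : ℂ := ((‖y‖⁻¹ : ℝ) : ℂ) with hc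
    have hcn : ‖c‖ = ‖y‖⁻¹ := by
      simp [hc, abs_of_nonneg (le_of_lt (inv_pos.mpr hny))]
    have hmem : ‖c • y‖ = 1 := by
      rw [norm_smul, hcn, inv_mul_cancel₀ hny.ne']
    have h1 : modulusOfInjectivityC Z ≤ ‖Matrix.toEuclideanCLM (𝕜 := ℂ) Z (c • y)‖ :=
      csInf_le (bdd Z) ⟨c • y, hmem, rfl⟩
    rw [_root_.map_smul, norm_smul, hcn] at h1
    calc modulusOfInjectivityC Z * ‖y‖
        ≤ (‖y‖⁻¹ * ‖Matrix.toEuclideanCLM (𝕜 := ℂ) Z y‖) * ‖y‖ :=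
          mul_le_mul_of_nonneg_right h1 hny.le
      _ = ‖Matrix.toEuclideanCLM (𝕜 := ℂ) Z y‖ := by
          field_simp

lemma submul (Z W : Matrix (Fin d) (Fin d) ℂ) :
    modulusOfInjectivityC Z * modulusOfInjectivityC W ≤ modulusOfInjectivityC (Z * W) := by
  by_cases hd : ∃ x : EuclideanSpace ℂ (Fin d), ‖x‖ = 1
  · obtain ⟨x₀, hx₀⟩ := hd
    apply le_csInf ((Set.Nonempty.image _) ⟨x₀, hx₀⟩)
    rintro r ⟨x, hx, rfl⟩
    have h2 : modulusOfInjectivityC W * ‖x‖ ≤ ‖Matrix.toEuclideanCLM (𝕜 := ℂ) W x‖ := le_norm W x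
    rw [Set.mem_setOf_eq] at hx
    rw [hx, mul_one] at h2
    have h3 := le_norm Z (Matrix.toEuclideanCLM (𝕜 := ℂ) W x)
    calc modulusOfInjectivityC Z * modulusOfInjectivityC W
        ≤ modulusOfInjectivityC Z * ‖Matrix.toEuclideanCLM (𝕜 := ℂ) W x‖ :=
          mul_le_mul_of_nonneg_left h2 (nonneg Z)
      _ ≤ ‖Matrix.toEuclideanCLM (𝕜 := ℂ) Z (Matrix.toEuclideanCLM (𝕜 := ℂ) W x)‖ := h3
      _ = ‖Matrix.toEuclideanCLM (𝕜 := ℂ) (Z * W) x‖ := by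
          rw [_root_.map_mul]; rfl
  · have hempty : {x : EuclideanSpace ℂ (Fin d) | ‖x‖ = 1} = ∅ := by
      ext x; simpa using fun h => hd ⟨x, h⟩
    have hz : ∀ (Y : Matrix (Fin d) (Fin d) ℂ), modulusOfInjectivityC Y = 0 := by
      intro Y
      unfold modulusOfInjectivityC
      rw [hempty]
      simp
    simp [hz]

lemma diag_lb (v : Fin d → ℂ) (c : ℝ) (hc : 0 ≤ c) (h : ∀ i, c ≤ ‖v i‖)
    (x : EuclideanSpace ℂ (Fin d)) :
    c * ‖x‖ ≤ ‖Matrix.toEuclideanCLM (𝕜 := ℂ) (Matrix.diagonal v) x‖ := by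
  have happ : ∀ i, (Matrix.toEuclideanCLM (𝕜 := ℂ) (Matrix.diagonal v) x) i = v i * x i := by
    intro i
    have := congrFun (Matrix.ofLp_toEuclideanCLM (𝕜 := ℂ) (Matrix.diagonal v) x) i
    simpa [Matrix.mulVec_diagonal] using this
  rw [EuclideanSpace.norm_eq, EuclideanSpace.norm_eq]
  rw [← Real.sqrt_sq hc, ← Real.sqrt_mul (sq_nonneg c), Finset.mul_sum]
  apply Real.sqrt_le_sqrt
  apply Finset.sum_le_sum
  intro i _
  rw [happ i, norm_mul, mul_pow]
  have h1 : c ^ 2 ≤ ‖v i‖ ^ 2 := by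
    have := h i
    nlinarith
  nlinarith [sq_nonneg (‖x i‖), norm_nonneg (x i)]

lemma diag_ge (hd : 0 < d) (v : Fin d → ℂ) (c : ℝ) (hc : 0 ≤ c) (h : ∀ i, c ≤ ‖v i‖) :
    c ≤ modulusOfInjectivityC (Matrix.diagonal v) := by
  have hx₀ : ‖(EuclideanSpace.single (⟨0, hd⟩ : Fin d) (1:ℂ) : EuclideanSpace ℂ (Fin d))‖ = 1 := by
    rw [EuclideanSpace.norm_single]; simp
  unfold modulusOfInjectivityC
  have hmem : (EuclideanSpace.single (⟨0, hd⟩ : Fin d) (1:ℂ) : EuclideanSpace ℂ (Fin d)) ∈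
      {x : EuclideanSpace ℂ (Fin d) | ‖x‖ = 1} := hx₀
  apply le_csInf ⟨_, Set.mem_image_of_mem _ hmem⟩
  rintro r ⟨x, hx, rfl⟩
  rw [Set.mem_setOf_eq] at hx
  have := diag_lb v c hc h x
  rwa [hx, mul_one] at this

end MOIaux

theorem modulusOfInjectivity_exp_ge_of_diagonalizable {d : ℕ}
    (A U D : Matrix (Fin d) (Fin d) ℂ) (hU : IsUnit U) (hD : D.IsDiag)
    (hA : A = U * D * U⁻¹)
    (hneg : ∀ μ ∈ spectrum ℂ A, μ.re < 0)
    (ϑ τ : ℝ) (hϑ : ϑ = modulusOfInjectivityC U * modulusOfInjectivityC U⁻¹)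
    (hτ : τ = -sInf (Complex.re '' spectrum ℂ A)) :
    ∀ s : ℝ, 0 ≤ s →
      modulusOfInjectivityC (NormedSpace.exp ((s : ℂ) • A)) ≥ ϑ * Real.exp (-τ * s) := by
  intro s hs
  rcases Nat.eq_zero_or_pos d with hd0 | hd
  · subst hd0
    have hempty : {x : EuclideanSpace ℂ (Fin 0) | ‖x‖ = 1} = ∅ := by
      ext x
      simp [Subsingleton.elim x 0]
    have hz : modulusOfInjectivityC U = 0 := by
      unfold modulusOfInjectivityC; rw [hempty]; simp
    rw [hϑ, hz, zero_mul, zero_mul]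
    exact MOIaux.nonneg _
  -- d > 0
  set v : Fin d → ℂ := D.diag with hv
  have hDdiag : D = Matrix.diagonal v := ((Matrix.isDiag_iff_diagonal_diag D).mp hD).symm
  obtain ⟨u, hu⟩ := hU
  have hUinv : (U : Matrix (Fin d) (Fin d) ℂ)⁻¹ = ↑u⁻¹ := by
    rw [← hu, Matrix.coe_units_inv]
  -- spectrum of A
  have hspec : spectrum ℂ A = Set.range v := by
    rw [hA, hUinv, ← hu, spectrum.units_conjugate, hDdiag, spectrum_diagonal]
  -- bound on real parts
  have hbdd : BddBelow (Complex.re '' spectrum ℂ A) := by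
    rw [hspec]
    exact ((Set.finite_range v).image _).bddBelow
  have hre : ∀ i, -τ ≤ (v i).re := by
    intro i
    rw [hτ, neg_neg]
    exact csInf_le hbdd ⟨v i, by rw [hspec]; exact ⟨i, rfl⟩, rfl⟩
  -- exponential
  have hexp : NormedSpace.exp ((s : ℂ) • A) =
      U * NormedSpace.exp ((s : ℂ) • D) * U⁻¹ := by
    rw [hA]
    have : (s : ℂ) • (U * D * U⁻¹) = U * ((s : ℂ) • D) * U⁻¹ := by
      rw [mul_smul_comm, smul_mul_assoc]
    rw [this]
    exact Matrix.exp_conj U ((s : ℂ) • D) ⟨u, hu⟩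
  have hexpD : NormedSpace.exp ((s : ℂ) • D) =
      Matrix.diagonal (fun i => Complex.exp ((s : ℂ) * v i)) := by
    rw [hDdiag, ← Matrix.diagonal_smul, Matrix.exp_diagonal]
    have hfun : NormedSpace.exp ((s : ℂ) • v) = fun i => Complex.exp ((s : ℂ) * v i) := by
      funext i
      rw [Pi.coe_exp, Pi.smul_apply, smul_eq_mul, Complex.exp_eq_exp_ℂ]
    rw [hfun]
  -- entrywise lower bound
  have hentry : ∀ i, Real.exp (-τ * s) ≤ ‖Complex.exp ((s : ℂ) * v i)‖ := by
    intro i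
    rw [Complex.norm_exp]
    have : ((s : ℂ) * v i).re = s * (v i).re := by simp
    rw [this]
    apply Real.exp_le_exp.mpr
    calc -τ * s = s * (-τ) := by ring
      _ ≤ s * (v i).re := mul_le_mul_of_nonneg_left (hre i) hs
  have hdiagj : Real.exp (-τ * s) ≤
      modulusOfInjectivityC (NormedSpace.exp ((s : ℂ) • D)) := by
    rw [hexpD]
    exact MOIaux.diag_ge hd _ _ (Real.exp_pos _).le hentry
  -- chain
  set E := NormedSpace.exp ((s : ℂ) • D) with hE
  have key : modulusOfInjectivityC U * (modulusOfInjectivityC E * modulusOfInjectivityC U⁻¹)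
      ≤ modulusOfInjectivityC (NormedSpace.exp ((s : ℂ) • A)) := by
    rw [hexp, show U * E * U⁻¹ = U * (E * U⁻¹) by rw [mul_assoc]]
    calc modulusOfInjectivityC U * (modulusOfInjectivityC E * modulusOfInjectivityC U⁻¹)
        ≤ modulusOfInjectivityC U * modulusOfInjectivityC (E * U⁻¹) :=
          mul_le_mul_of_nonneg_left (MOIaux.submul E U⁻¹) (MOIaux.nonneg U)
      _ ≤ modulusOfInjectivityC (U * (E * U⁻¹)) := MOIaux.submul U (E * U⁻¹)
  refine le_trans ?_ key
  rw [hϑ]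
  calc modulusOfInjectivityC U * modulusOfInjectivityC U⁻¹ * Real.exp (-τ * s)
      = modulusOfInjectivityC U * (Real.exp (-τ * s) * modulusOfInjectivityC U⁻¹) := by ring
    _ ≤ modulusOfInjectivityC U * (modulusOfInjectivityC E * modulusOfInjectivityC U⁻¹) := by
        apply mul_le_mul_of_nonneg_left _ (MOIaux.nonneg U)
        exact mul_le_mul_of_nonneg_right hdiagj (MOIaux.nonneg U⁻¹)
end

section
/- Let B ∈ M_d(C) be diagonalizable with all eigenvalues having strictly negative real part, let α > 1, β > 0 and h ≥ 0. Then ∫_0^∞ e^{(Bh − βI_d) r} r^{α−2} dr = Γ(α−1) (βI_d − Bh)^{1−α}, where the matrix power is defined by spectral calculus via the principal branch of the logarithm. -/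
open Matrix MeasureTheory

section AuxScalar

open MeasureTheory Set Complex Filter Metric


lemma myAEMeas {a c : ℂ} :
    AEStronglyMeasurable (fun t : ℝ => (t : ℂ) ^ (a - 1) * Complex.exp (-(c * t)))
      (volume.restrict (Ioi 0)) := by
  apply ContinuousOn.aestronglyMeasurable ?_ measurableSet_Ioi
  apply ContinuousOn.mul
  · exact fun t ht =>
      (Complex.continuousAt_ofReal_cpow_const t (a - 1) (Or.inr (ne_of_gt ht))).continuousWithinAt
  · exact (Complex.continuous_exp.comp
      ((continuous_const.mul Complex.continuous_ofReal).neg)).continuousOn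

lemma myIntegrable {a c : ℂ} (ha : 0 < a.re) (hc : 0 < c.re) :
    IntegrableOn (fun t : ℝ => (t : ℂ) ^ (a - 1) * Complex.exp (-(c * t))) (Ioi 0) := by
  have hbound : IntegrableOn (fun t : ℝ => t ^ (a.re - 1) * Real.exp (-c.re * t)) (Ioi 0) := by
    have := integrableOn_rpow_mul_exp_neg_mul_rpow (p := 1) (s := a.re - 1) (b := c.re)
      (by linarith) one_pos hc
    simpa [Real.rpow_natCast] using this
  refine hbound.mono' myAEMeas ?_
  filter_upwards [ae_restrict_mem measurableSet_Ioi] with t ht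
  rw [norm_mul,
    Complex.norm_cpow_eq_rpow_re_of_pos ht, Complex.norm_exp]
  have : (-(c * ↑t)).re = -c.re * t := by simp [Complex.mul_re]
  rw [Complex.sub_re, Complex.one_re, this]

lemma myHasDeriv {a : ℂ} (ha : 0 < a.re) {c₀ : ℂ} (hc₀ : 0 < c₀.re) :
    HasDerivAt (fun c : ℂ => ∫ t : ℝ in Ioi 0, (t : ℂ) ^ (a - 1) * Complex.exp (-(c * t)))
      (∫ t : ℝ in Ioi 0, (t : ℂ) ^ (a - 1) * (Complex.exp (-(c₀ * t)) * (-t))) c₀ := by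
  set ε := c₀.re / 2 with hε
  have hεpos : 0 < ε := half_pos hc₀
  have key := hasDerivAt_integral_of_dominated_loc_of_deriv_le (μ := volume.restrict (Ioi 0))
    (F := fun c (t : ℝ) => (t : ℂ) ^ (a - 1) * Complex.exp (-(c * t)))
    (F' := fun c (t : ℝ) => (t : ℂ) ^ (a - 1) * (Complex.exp (-(c * t)) * (-t)))
    (x₀ := c₀) (bound := fun t : ℝ => t ^ a.re * Real.exp (-ε * t)) (Metric.ball_mem_nhds c₀ hεpos)
    (Eventually.of_forall fun c => myAEMeas)
    (myIntegrable ha hc₀) ?_ ?_ ?_ ?_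
  · exact key.2
  · -- meas of F'
    apply ContinuousOn.aestronglyMeasurable ?_ measurableSet_Ioi
    apply ContinuousOn.mul
    · exact fun t ht =>
        (Complex.continuousAt_ofReal_cpow_const t (a - 1) (Or.inr (ne_of_gt ht))).continuousWithinAt
    · exact ((Complex.continuous_exp.comp
        ((continuous_const.mul Complex.continuous_ofReal).neg)).mul
        Complex.continuous_ofReal.neg).continuousOn
  · -- bound
    filter_upwards [ae_restrict_mem measurableSet_Ioi] with t ht c hcball
    have hcre : ε ≤ c.re := by
      have : |(c - c₀).re| ≤ dist c c₀ := by
        simpa [Complex.dist_eq] using Complex.abs_re_le_norm (c - c₀)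
      rw [mem_ball, Complex.dist_eq] at hcball
      have h2 := abs_le.mp this
      rw [Complex.dist_eq] at h2
      have : -(ε) ≤ (c - c₀).re := by linarith [h2.1]
      simp only [Complex.sub_re] at this
      linarith
    rw [norm_mul, norm_mul,
      Complex.norm_cpow_eq_rpow_re_of_pos ht, Complex.norm_exp, norm_neg, Complex.norm_real,
      Real.norm_eq_abs, abs_of_pos ht]
    have hre : (-(c * ↑t)).re = -(c.re * t) := by simp [Complex.mul_re]
    rw [hre, Complex.sub_re, Complex.one_re]
    have h1 : t ^ (a.re - 1) * (Real.exp (-(c.re * t)) * t) = t ^ a.re * Real.exp (-(c.re * t)) := by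
      rw [mul_comm (Real.exp _) t, ← mul_assoc, ← Real.rpow_add_one (ne_of_gt ht)]
      ring_nf
    rw [h1]
    apply mul_le_mul_of_nonneg_left _ (Real.rpow_nonneg ht.le _)
    apply Real.exp_le_exp.mpr
    nlinarith [mul_le_mul_of_nonneg_right hcre (le_of_lt (mem_Ioi.mp ht))]
  · -- bound integrable
    have := integrableOn_rpow_mul_exp_neg_mul_rpow (p := 1) (s := a.re) (b := ε)
      (by linarith) one_pos hεpos
    simpa [Real.rpow_natCast, IntegrableOn] using this
  · -- differentiability
    filter_upwards [ae_restrict_mem measurableSet_Ioi] with t _ c _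
    have h1 : HasDerivAt (fun c : ℂ => -(c * (t : ℂ))) (-(t : ℂ)) c :=
      (hasDerivAt_mul_const (t : ℂ)).neg
    simpa using (h1.cexp).const_mul ((t : ℂ) ^ (a - 1))

lemma integral_cpow_mul_cexp {a : ℂ} (ha : 0 < a.re) :
    ∀ c : ℂ, 0 < c.re →
      ∫ t : ℝ in Ioi 0, (t : ℂ) ^ (a - 1) * Complex.exp (-(c * t)) =
        Complex.Gamma a * c ^ (-a) := by
  set U : Set ℂ := {z : ℂ | 0 < z.re} with hUdef
  have hUo : IsOpen U := by
    simpa [hUdef] using isOpen_lt continuous_const Complex.continuous_re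
  set f : ℂ → ℂ := fun c => ∫ t : ℝ in Ioi 0, (t : ℂ) ^ (a - 1) * Complex.exp (-(c * t)) with hf
  set g : ℂ → ℂ := fun c => Complex.Gamma a * c ^ (-a) with hg
  have hfa : AnalyticOnNhd ℂ f U := by
    apply DifferentiableOn.analyticOnNhd ?_ hUo
    exact fun c hc => ((myHasDeriv ha hc).differentiableAt).differentiableWithinAt
  have hga : AnalyticOnNhd ℂ g U := by
    apply DifferentiableOn.analyticOnNhd ?_ hUo
    intro c hc
    apply DifferentiableAt.differentiableWithinAt
    exact (((hasDerivAt_id c).cpow_const (Complex.mem_slitPlane_iff.mpr (Or.inl hc))).differentiableAt).const_mul _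
  have hpre : IsPreconnected U := (convex_halfSpace_re_gt (0:ℝ)).isPreconnected
  have h1U : (1 : ℂ) ∈ U := by simp [hUdef]
  have hreal : ∀ r : ℝ, 0 < r → f r = g r := by
    intro r hr
    have := Complex.integral_cpow_mul_exp_neg_mul_Ioi ha hr
    rw [hf, hg]
    simp only
    rw [show (fun t : ℝ => (t : ℂ) ^ (a - 1) * Complex.exp (-((r : ℂ) * t))) =
        fun t : ℝ => (t : ℂ) ^ (a - 1) * Complex.exp (-(r * t)) by norm_num, this]
    rw [mul_comm]
    congr 1
    rw [one_div, Complex.inv_cpow, ← Complex.cpow_neg]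
    rw [Complex.arg_ofReal_of_nonneg hr.le]
    exact Ne.symm (ne_of_gt Real.pi_pos)
  have hfreq : ∃ᶠ z in nhdsWithin (1 : ℂ) {(1:ℂ)}ᶜ, f z = g z := by
    have hseq : Tendsto (fun n : ℕ => ((1 + ((n:ℝ)+1)⁻¹ : ℝ) : ℂ)) atTop
        (nhdsWithin (1 : ℂ) {(1:ℂ)}ᶜ) := by
      apply tendsto_nhdsWithin_of_tendsto_nhds_of_eventually_within
      · have h0 : Tendsto (fun n : ℕ => (1 + ((n:ℝ)+1)⁻¹ : ℝ)) atTop (nhds 1) := by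
          simpa using tendsto_const_nhds.add (tendsto_one_div_add_atTop_nhds_zero_nat (𝕜 := ℝ))
        have h1 := (Complex.continuous_ofReal.tendsto (1:ℝ)).comp h0
        rw [show ((1:ℝ):ℂ) = (1:ℂ) by norm_num] at h1
        exact h1
      · filter_upwards with n
        simp only [Set.mem_compl_iff, Set.mem_singleton_iff]
        intro hcontra
        have h' : (1 + ((n:ℝ)+1)⁻¹ : ℝ) = 1 := by exact_mod_cast hcontra
        have h2 : ((n:ℝ)+1)⁻¹ = 0 := by linarith
        exact (by positivity : (0:ℝ) < ((n:ℝ)+1)⁻¹).ne' h2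
    apply hseq.frequently
    apply Frequently.of_forall
    intro n
    exact hreal _ (by positivity)
  have := hfa.eqOn_of_preconnected_of_frequently_eq hga hpre h1U hfreq
  exact fun c hc => this hc

end AuxScalar

/-- The matrix power `(β I_d - B h)^{1-α}` defined by spectral calculus via the principal
branch of the complex logarithm, for `B = U D U⁻¹` diagonalizable. -/
noncomputable def spectralPower {d : ℕ} (U D : Matrix (Fin d) (Fin d) ℂ)
    (β h : ℝ) (α : ℝ) : Matrix (Fin d) (Fin d) ℂ :=
  U * Matrix.diagonal (fun i => ((β : ℂ) - D i i * (h : ℂ)) ^ ((1 : ℂ) - (α : ℂ))) * U⁻¹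

theorem integral_matrix_exp_rpow {d : ℕ} (B U D : Matrix (Fin d) (Fin d) ℂ)
    (hU : IsUnit U) (hD : D.IsDiag) (hB : B = U * D * U⁻¹)
    (hneg : ∀ μ ∈ spectrum ℂ B, μ.re < 0)
    (α β h : ℝ) (hα : 1 < α) (hβ : 0 < β) (hh : 0 ≤ h) :
    ∀ i j : Fin d,
      ∫ r in Set.Ioi (0 : ℝ),
          (NormedSpace.exp ((r : ℂ) • ((h : ℂ) • B - (β : ℂ) • (1 : Matrix (Fin d) (Fin d) ℂ)))) i j
            * (r : ℂ) ^ ((α : ℂ) - 2) =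
        (Complex.Gamma ((α : ℂ) - 1) • spectralPower U D β h α) i j := by
  intro i j
  obtain ⟨u, hu⟩ := hU
  have hUdet : IsUnit U.det := (Matrix.isUnit_iff_isUnit_det U).mp ⟨u, hu⟩
  -- eigenvalues have negative real part
  have hDk : ∀ k, (D k k).re < 0 := by
    intro k
    apply hneg
    rw [hB, ← hu, ← Matrix.coe_units_inv, spectrum.units_conjugate]
    rw [← hD.diagonal_diag, spectrum_diagonal]
    exact ⟨k, by simp⟩
  set c : Fin d → ℂ := fun k => (β : ℂ) - (h : ℂ) * D k k with hc
  have hcre : ∀ k, 0 < (c k).re := by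
    intro k
    have h1 : h * (D k k).re ≤ 0 := mul_nonpos_of_nonneg_of_nonpos hh (hDk k).le
    simp only [hc, Complex.sub_re, Complex.ofReal_re, Complex.mul_re, Complex.ofReal_im]
    simp only [zero_mul]
    nlinarith
  -- rewrite the matrix exponential
  have hexp : ∀ r : ℝ, NormedSpace.exp
      ((r : ℂ) • ((h : ℂ) • B - (β : ℂ) • (1 : Matrix (Fin d) (Fin d) ℂ))) =
      U * Matrix.diagonal (fun k => Complex.exp (-(c k * r))) * U⁻¹ := by
    intro r
    have hdiag : (r : ℂ) • ((h : ℂ) • D - (β : ℂ) • (1 : Matrix (Fin d) (Fin d) ℂ)) =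
        Matrix.diagonal (fun k => -(c k * r)) := by
      ext k l
      rcases eq_or_ne k l with rfl | hkl
      · simp only [Matrix.smul_apply, Matrix.sub_apply, Matrix.one_apply_eq,
          Matrix.diagonal_apply_eq, hc, smul_eq_mul]
        ring
      · simp [Matrix.diagonal_apply_ne _ hkl, Matrix.one_apply_ne hkl, hD hkl]
    have hX : ∀ (X : Matrix (Fin d) (Fin d) ℂ) (z : ℂ), U * (z • X) * U⁻¹ = z • (U * X * U⁻¹) := by
      intro X z
      rw [Matrix.mul_smul, Matrix.smul_mul]
    have harg : (r : ℂ) • ((h : ℂ) • B - (β : ℂ) • (1 : Matrix (Fin d) (Fin d) ℂ)) =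
        U * Matrix.diagonal (fun k => -(c k * r)) * U⁻¹ := by
      rw [← hdiag, hX]
      congr 1
      rw [Matrix.mul_sub, Matrix.sub_mul, hX, hX, ← hB, mul_one, Matrix.mul_nonsing_inv U hUdet]
    rw [harg, Matrix.exp_conj U _ ⟨u, hu⟩, Matrix.exp_diagonal]
    have hpe : NormedSpace.exp (fun k : Fin d => -(c k * (r:ℂ))) =
        fun k => Complex.exp (-(c k * (r:ℂ))) := by
      funext k
      rw [Pi.coe_exp, ← Complex.exp_eq_exp_ℂ]
    rw [hpe]
  -- entrywise formula
  have hentry : ∀ (f : Fin d → ℂ), (U * Matrix.diagonal f * U⁻¹) i j =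
      ∑ k, U i k * f k * U⁻¹ k j := by
    intro f
    rw [Matrix.mul_apply]
    congr 1
    ext k
    rw [Matrix.mul_diagonal]
  set a : ℂ := (α : ℂ) - 1 with ha
  have hare : 0 < a.re := by simp [ha]; linarith
  have hint : ∀ k : Fin d, IntegrableOn
      (fun r : ℝ => U i k * U⁻¹ k j * ((r : ℂ) ^ (a - 1) * Complex.exp (-(c k * r))))
      (Set.Ioi 0) := by
    intro k
    exact (myIntegrable hare (hcre k)).const_mul _
  calc ∫ r in Set.Ioi (0 : ℝ),
          (NormedSpace.exp ((r : ℂ) • ((h : ℂ) • B - (β : ℂ) • (1 : Matrix (Fin d) (Fin d) ℂ)))) i j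
            * (r : ℂ) ^ ((α : ℂ) - 2)
      = ∫ r in Set.Ioi (0 : ℝ), ∑ k, U i k * U⁻¹ k j *
          ((r : ℂ) ^ (a - 1) * Complex.exp (-(c k * r))) := by
        apply setIntegral_congr_fun measurableSet_Ioi
        intro r hr
        dsimp only
        rw [hexp r, hentry, Finset.sum_mul]
        congr 1
        ext k
        have : a - 1 = (α : ℂ) - 2 := by rw [ha]; ring
        rw [this]
        ring
    _ = ∑ k, U i k * U⁻¹ k j * (Complex.Gamma a * (c k) ^ (-a)) := by
        rw [integral_finset_sum _ (fun k _ => hint k)]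
        congr 1
        ext k
        rw [MeasureTheory.integral_const_mul, integral_cpow_mul_cexp hare (c k) (hcre k)]
    _ = (Complex.Gamma ((α : ℂ) - 1) • spectralPower U D β h α) i j := by
        rw [Matrix.smul_apply, spectralPower, hentry, smul_eq_mul, Finset.mul_sum]
        congr 1
        ext k
        have h1 : -a = 1 - (α:ℂ) := by rw [ha]; ring
        have h2 : c k = (β:ℂ) - D k k * (h:ℂ) := by rw [hc]; ring
        rw [← h1, ← h2]
        ring
end

section
/- For all z, k ∈ C with Re(z) > 0 and Re(k) > 0, ∫_0^∞ t^{z−1} e^{−kt} dt = Γ(z) k^{−z}, where k^{−z} is defined via the principal branch of the complex logarithm. -/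
open MeasureTheory Set Filter Metric

private lemma aux_integrable {s b : ℝ} (hs : -1 < s) (hb : 0 < b) :
    IntegrableOn (fun t : ℝ => t ^ s * Real.exp (-b * t)) (Set.Ioi 0) := by
  have h := Real.GammaIntegral_convergent (by linarith : 0 < s + 1)
  have h2 : IntegrableOn (fun x : ℝ => Real.exp (-(b * x)) * (b * x) ^ (s + 1 - 1))
      (Ioi 0) := by
    have := (integrableOn_Ioi_comp_mul_left_iff
      (fun x : ℝ => Real.exp (-x) * x ^ (s + 1 - 1)) 0 hb).mpr
    rw [mul_zero] at this
    exact this h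
  refine MeasureTheory.IntegrableOn.congr_fun (s := Ioi 0) (h2.const_mul (b ^ s)⁻¹) (fun x hx => ?_) measurableSet_Ioi
  rw [mem_Ioi] at hx
  have hbs : (0:ℝ) < b ^ s := Real.rpow_pos_of_pos hb s
  rw [add_sub_cancel_right, Real.mul_rpow hb.le hx.le]
  field_simp

private lemma aux_cont (z : ℂ) (x : ℂ) :
    ContinuousOn (fun t : ℝ => (t : ℂ) ^ (z - 1) * Complex.exp (-x * t)) (Ioi 0) := by
  apply ContinuousOn.mul
  · intro t ht
    refine ContinuousAt.continuousWithinAt ?_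
    exact (continuousAt_cpow_const
      (Or.inl (by simpa using (mem_Ioi.mp ht)))).comp
      Complex.continuous_ofReal.continuousAt
  · exact (Complex.continuous_exp.comp
      ((continuous_const.mul Complex.continuous_ofReal))).continuousOn

private lemma aux_meas (z : ℂ) (x : ℂ) :
    AEStronglyMeasurable (fun t : ℝ => (t : ℂ) ^ (z - 1) * Complex.exp (-x * t))
      (volume.restrict (Ioi 0)) :=
  (aux_cont z x).aestronglyMeasurable measurableSet_Ioi

private lemma aux_norm (z : ℂ) (x : ℂ) {t : ℝ} (ht : 0 < t) :
    ‖(t : ℂ) ^ (z - 1) * Complex.exp (-x * t)‖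
      = t ^ (z.re - 1) * Real.exp (-x.re * t) := by
  rw [norm_mul, Complex.norm_cpow_eq_rpow_re_of_pos ht,
    Complex.norm_exp]
  simp only [Complex.sub_re, Complex.one_re, Complex.neg_re, Complex.mul_re,
    Complex.ofReal_re, Complex.ofReal_im, mul_zero, sub_zero, neg_mul]

private lemma aux_integrable_F (z : ℂ) (hz : 0 < z.re) {k : ℂ} (hk : 0 < k.re) :
    Integrable (fun t : ℝ => (t : ℂ) ^ (z - 1) * Complex.exp (-k * t))
      (volume.restrict (Ioi 0)) := by
  have h := aux_integrable (s := z.re - 1) (b := k.re) (by linarith) hk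
  refine ⟨aux_meas z k, h.hasFiniteIntegral.mono' ?_⟩
  filter_upwards [ae_restrict_mem measurableSet_Ioi] with t ht
  rw [aux_norm z k (mem_Ioi.mp ht)]

private lemma aux_deriv (z : ℂ) (hz : 0 < z.re) {k : ℂ} (hk : 0 < k.re) :
    HasDerivAt (fun k : ℂ => ∫ t in Ioi (0 : ℝ), (t : ℂ) ^ (z - 1) * Complex.exp (-k * t))
      (∫ t in Ioi (0 : ℝ), -(t : ℂ) * ((t : ℂ) ^ (z - 1) * Complex.exp (-k * t))) k := by
  set ε := k.re / 2 with hε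
  have hε_pos : 0 < ε := by positivity
  have key := hasDerivAt_integral_of_dominated_loc_of_deriv_le (μ := volume.restrict (Ioi 0))
    (F := fun x (t : ℝ) => (t : ℂ) ^ (z - 1) * Complex.exp (-x * t))
    (F' := fun x (t : ℝ) => -(t : ℂ) * ((t : ℂ) ^ (z - 1) * Complex.exp (-x * t)))
    (x₀ := k) (bound := fun t : ℝ => t ^ z.re * Real.exp (-ε * t)) (s := ball k ε) (ball_mem_nhds k hε_pos)
    (Eventually.of_forall fun x => aux_meas z x) (aux_integrable_F z hz hk) ?_ ?_ ?_ ?_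
  · exact key.2
  · -- measurability of F' k
    exact ((Complex.continuous_ofReal.continuousOn.neg.mul
      (aux_cont z k)).aestronglyMeasurable measurableSet_Ioi)
  · -- bound
    filter_upwards [ae_restrict_mem measurableSet_Ioi] with t ht x hx
    rw [mem_Ioi] at ht
    rw [norm_mul, aux_norm z x ht, norm_neg,
      Complex.norm_real, Real.norm_eq_abs, abs_of_pos ht]
    have hre : ε < x.re := by
      have h1 : |x.re - k.re| ≤ dist x k := by
        simpa [Complex.dist_eq, Complex.sub_re] using Complex.abs_re_le_norm (x - k)
      have h2 : dist x k < ε := mem_ball.mp hx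
      have := (abs_sub_lt_iff.mp (lt_of_le_of_lt h1 h2)).2
      simp only [hε] at *
      linarith
    have hexp : Real.exp (-x.re * t) ≤ Real.exp (-ε * t) :=
      Real.exp_le_exp.mpr (by nlinarith)
    calc t * (t ^ (z.re - 1) * Real.exp (-x.re * t))
        ≤ t * (t ^ (z.re - 1) * Real.exp (-ε * t)) := by
          refine mul_le_mul_of_nonneg_left ?_ ht.le
          exact mul_le_mul_of_nonneg_left hexp (by positivity)
      _ = t ^ z.re * Real.exp (-ε * t) := by
          rw [show z.re = 1 + (z.re - 1) by ring, Real.rpow_add ht, Real.rpow_one]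
          ring
  · -- integrability of bound
    exact aux_integrable (by linarith) hε_pos
  · -- differentiability
    filter_upwards [ae_restrict_mem measurableSet_Ioi] with t ht x hx
    have h1 := (((hasDerivAt_id x).neg.mul_const (t : ℂ))).cexp
    have h2 := h1.const_mul ((t : ℂ) ^ (z - 1))
    change HasDerivAt (fun y : ℂ => (t : ℂ) ^ (z - 1) * Complex.exp (-y * t))
      ((t : ℂ) ^ (z - 1) * (Complex.exp (-x * t) * (-1 * t))) x at h2
    exact h2.congr_deriv (by ring)

theorem integral_cpow_exp_eq_Gamma_mul_cpow (z k : ℂ) (hz : 0 < z.re) (hk : 0 < k.re) :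
    ∫ t in Set.Ioi (0 : ℝ), (t : ℂ) ^ (z - 1) * Complex.exp (-k * t) =
      Complex.Gamma z * k ^ (-z) := by
  set f : ℂ → ℂ := fun k => ∫ t in Set.Ioi (0 : ℝ), (t : ℂ) ^ (z - 1) * Complex.exp (-k * t)
  set g : ℂ → ℂ := fun k => Complex.Gamma z * k ^ (-z)
  set U : Set ℂ := {k : ℂ | 0 < k.re} with hU
  have hUopen : IsOpen U := isOpen_lt continuous_const Complex.continuous_re
  have hUpre : IsPreconnected U := (convex_halfSpace_re_gt 0).isPreconnected
  have hfa : AnalyticOnNhd ℂ f U := by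
    refine DifferentiableOn.analyticOnNhd (fun x hx => ?_) hUopen
    exact ((aux_deriv z hz hx).differentiableAt).differentiableWithinAt
  have hga : AnalyticOnNhd ℂ g U := by
    refine DifferentiableOn.analyticOnNhd (fun x hx => ?_) hUopen
    refine ((differentiableAt_id.cpow (differentiableAt_const _) ?_).const_mul _).differentiableWithinAt
    exact Or.inl hx
  have hreal : ∀ r : ℝ, 0 < r → f r = g r := by
    intro r hr
    have h := Complex.integral_cpow_mul_exp_neg_mul_Ioi hz hr
    have harg : Complex.arg (r : ℂ) ≠ Real.pi := by
      rw [Complex.arg_ofReal_of_nonneg hr.le]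
      exact fun h => Real.pi_ne_zero h.symm
    have h2 : ((1 : ℂ) / r) ^ z = (r : ℂ) ^ (-z) := by
      rw [one_div, Complex.inv_cpow _ _ harg, Complex.cpow_neg]
    simp only [f, g]
    calc (∫ t in Set.Ioi (0 : ℝ), (t : ℂ) ^ (z - 1) * Complex.exp (-(r : ℂ) * t))
        = ∫ t in Set.Ioi (0 : ℝ), (t : ℂ) ^ (z - 1) * Complex.exp (-((r : ℂ) * t)) := by
          simp_rw [neg_mul]
      _ = ((1 : ℂ) / r) ^ z * Complex.Gamma z := h
      _ = Complex.Gamma z * (r : ℂ) ^ (-z) := by rw [h2]; ring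
  have hfreq : ∃ᶠ x in nhdsWithin (1 : ℂ) {(1 : ℂ)}ᶜ, f x = g x := by
    have htend : Tendsto (fun n : ℕ => ((1 + 1 / (n + 1) : ℝ) : ℂ)) atTop
        (nhdsWithin (1 : ℂ) {(1 : ℂ)}ᶜ) := by
      rw [tendsto_nhdsWithin_iff]
      constructor
      · have : Tendsto (fun n : ℕ => (1 + 1 / (n + 1) : ℝ)) atTop (nhds 1) := by
          have := tendsto_one_div_add_atTop_nhds_zero_nat (𝕜 := ℝ)
          simpa using (tendsto_const_nhds (x := (1:ℝ))).add this
        have := (Complex.continuous_ofReal.tendsto 1).comp this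
        simpa [Function.comp_def] using this
      · refine Eventually.of_forall fun n => ?_
        simp only [mem_compl_iff, mem_singleton_iff]
        intro hc
        have : (1 + 1 / (n + 1) : ℝ) = 1 := by exact_mod_cast hc
        have hpos : (0:ℝ) < 1 / (n + 1) := by positivity
        linarith
    refine htend.frequently (Frequently.of_forall fun n => ?_)
    exact hreal _ (by positivity)
  have := hfa.eqOn_of_preconnected_of_frequently_eq hga hUpre
    (show (1 : ℂ) ∈ U by simp [hU]) hfreq
  exact this hk
end

section
/- Let a ∈ R^d, κ ≥ 1 and ρ > 0 with ||e^{As}|| ≤ κ e^{-ρs} for all s ≥ 0 for a fixed A ∈ M_d(R), and let ν be a Lévy measure on R^d (i.e. ν({0})=0 and ∫ (1 ∧ ||x||²) ν(dx) < ∞) with ∫_{||x||>1} ln(||x||) ν(dx) < ∞. Then ∫_0^∞ ∫_{R^d} (1 ∧ ||e^{As}x||²) ν(dx) ds ≤ ∫_{||x||>1/κ} (ln(κ||x||)+1/2)/ρ ν(dx) + ∫_{||x||≤1/κ} κ²||x||²/(2ρ) ν(dx) < ∞. -/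
open Matrix MeasureTheory

/-- The Euclidean operator norm of a real matrix. -/
noncomputable def euclideanOpNorm {d : ℕ} (Z : Matrix (Fin d) (Fin d) ℝ) : ℝ :=
  ‖Matrix.toEuclideanCLM (𝕜 := ℝ) Z‖

lemma intExpIoi (a : ℝ) {b : ℝ} (hb : 0 < b) :
    ∫ x in Set.Ioi a, Real.exp (-(b * x)) = Real.exp (-(b * a)) / b := by
  have := MeasureTheory.integral_comp_mul_left_Ioi (fun u => Real.exp (-u)) a hb
  simp only [smul_eq_mul] at this
  rw [this, integral_exp_neg_Ioi]
  rw [mul_comm b a, eq_div_iff hb.ne']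
  field_simp

lemma key_lintegral (ρ c s₀ : ℝ) (hρ : 0 < ρ) (hs₀ : 0 ≤ s₀) :
    ∫⁻ s in Set.Ioi (0:ℝ), ENNReal.ofReal (min 1 (c ^ 2 * Real.exp (-(2 * ρ) * s))) ≤
      ENNReal.ofReal s₀ + ENNReal.ofReal (c ^ 2 * Real.exp (-(2 * ρ) * s₀) / (2 * ρ)) := by
  have h2ρ : 0 < 2 * ρ := by linarith
  rw [← Set.Ioc_union_Ioi_eq_Ioi hs₀]
  refine (lintegral_union_le _ _ _).trans (add_le_add ?_ ?_)
  · calc ∫⁻ s in Set.Ioc (0:ℝ) s₀, ENNReal.ofReal (min 1 (c ^ 2 * Real.exp (-(2 * ρ) * s)))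
        ≤ ∫⁻ _ in Set.Ioc (0:ℝ) s₀, 1 := by
          refine lintegral_mono fun s => ?_
          simpa using ENNReal.ofReal_le_ofReal (min_le_left _ _)
      _ = ENNReal.ofReal s₀ := by
          rw [setLIntegral_const, one_mul, Real.volume_Ioc, sub_zero]
  · have hle : ∫⁻ s in Set.Ioi s₀, ENNReal.ofReal (min 1 (c ^ 2 * Real.exp (-(2 * ρ) * s)))
        ≤ ∫⁻ s in Set.Ioi s₀, ENNReal.ofReal (c ^ 2 * Real.exp (-(2 * ρ) * s)) :=
      lintegral_mono fun s => ENNReal.ofReal_le_ofReal (min_le_right _ _)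
    refine hle.trans ?_
    have hint : IntegrableOn (fun s : ℝ => c ^ 2 * Real.exp (-(2 * ρ) * s)) (Set.Ioi s₀) :=
      (exp_neg_integrableOn_Ioi s₀ h2ρ).const_mul _
    rw [← ofReal_integral_eq_lintegral_ofReal hint
        (ae_of_all _ fun s => by positivity)]
    rw [MeasureTheory.integral_const_mul]
    have : ∫ s in Set.Ioi s₀, Real.exp (-(2 * ρ) * s) = Real.exp (-((2 * ρ) * s₀)) / (2 * ρ) := by
      simpa only [neg_mul] using intExpIoi s₀ h2ρ
    rw [this]
    exact le_of_eq (by rw [neg_mul]; ring_nf)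

lemma meas_gt_lt_top {d : ℕ} (ν : Measure (EuclideanSpace ℝ (Fin d)))
    (hν2 : ∫⁻ x, ENNReal.ofReal (min 1 (‖x‖ ^ 2)) ∂ν < ⊤) {r : ℝ} (hr : 0 < r) :
    ν {x | r < ‖x‖} < ⊤ := by
  set c : ENNReal := ENNReal.ofReal (min 1 (r ^ 2)) with hc
  have hc0 : c ≠ 0 := by
    rw [hc]
    simp only [ne_eq, ENNReal.ofReal_eq_zero, not_le]
    positivity
  have hS : MeasurableSet {x : EuclideanSpace ℝ (Fin d) | r < ‖x‖} :=
    measurableSet_lt measurable_const measurable_norm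
  have hmul : c * ν {x | r < ‖x‖} < ⊤ := by
    calc c * ν {x | r < ‖x‖} = ∫⁻ _ in {x | r < ‖x‖}, c ∂ν := (setLIntegral_const _ _).symm
      _ ≤ ∫⁻ x in {x | r < ‖x‖}, ENNReal.ofReal (min 1 (‖x‖ ^ 2)) ∂ν := by
          refine lintegral_mono_ae ((ae_restrict_iff' hS).mpr (ae_of_all _ fun x hx => ?_))
          exact ENNReal.ofReal_le_ofReal
            (min_le_min le_rfl (pow_le_pow_left₀ hr.le (le_of_lt hx) 2))
      _ ≤ ∫⁻ x, ENNReal.ofReal (min 1 (‖x‖ ^ 2)) ∂ν := setLIntegral_le_lintegral _ _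
      _ < ⊤ := hν2
  by_contra h
  rw [not_lt, top_le_iff] at h
  rw [h, ENNReal.mul_top hc0] at hmul
  exact (lt_irrefl _ hmul)

lemma levy_sigmaFinite {d : ℕ} (ν : Measure (EuclideanSpace ℝ (Fin d)))
    (hν0 : ν {0} = 0)
    (hν2 : ∫⁻ x, ENNReal.ofReal (min 1 (‖x‖ ^ 2)) ∂ν < ⊤) : SigmaFinite ν := by
  refine ⟨⟨⟨fun n => {x | 1 / (n + 1 : ℝ) < ‖x‖} ∪ {0}, fun _ => trivial, fun n => ?_, ?_⟩⟩⟩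
  · refine lt_of_le_of_lt (measure_union_le _ _) ?_
    rw [hν0, add_zero]
    exact meas_gt_lt_top ν hν2 (by positivity)
  · ext x
    simp only [Set.mem_iUnion, Set.mem_union, Set.mem_setOf_eq, Set.mem_singleton_iff,
      Set.mem_univ, iff_true]
    rcases eq_or_ne x 0 with h | h
    · exact ⟨0, Or.inr h⟩
    · obtain ⟨n, hn⟩ := exists_nat_one_div_lt (norm_pos_iff.mpr h)
      exact ⟨n, Or.inl hn⟩

theorem levy_measure_double_integral_bound {d : ℕ} (A : Matrix (Fin d) (Fin d) ℝ)
    (κ ρ : ℝ) (hκ : 1 ≤ κ) (hρ : 0 < ρ)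
    (hbound : ∀ s : ℝ, 0 ≤ s →
      euclideanOpNorm (NormedSpace.exp (s • A)) ≤ κ * Real.exp (-ρ * s))
    (ν : Measure (EuclideanSpace ℝ (Fin d)))
    (hν0 : ν {0} = 0)
    (hν2 : ∫⁻ x, ENNReal.ofReal (min 1 (‖x‖ ^ 2)) ∂ν < ⊤)
    (hνlog : ∫⁻ x in {x : EuclideanSpace ℝ (Fin d) | 1 < ‖x‖},
        ENNReal.ofReal (Real.log ‖x‖) ∂ν < ⊤) :
    (∫⁻ s in Set.Ioi (0 : ℝ), ∫⁻ x,
          ENNReal.ofReal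
            (min 1 (‖Matrix.toEuclideanCLM (𝕜 := ℝ) (NormedSpace.exp (s • A)) x‖ ^ 2)) ∂ν) ≤
        (∫⁻ x in {x : EuclideanSpace ℝ (Fin d) | 1 / κ < ‖x‖},
            ENNReal.ofReal ((Real.log (κ * ‖x‖) + 1 / 2) / ρ) ∂ν) +
          ∫⁻ x in {x : EuclideanSpace ℝ (Fin d) | ‖x‖ ≤ 1 / κ},
            ENNReal.ofReal (κ ^ 2 * ‖x‖ ^ 2 / (2 * ρ)) ∂ν ∧
      (∫⁻ x in {x : EuclideanSpace ℝ (Fin d) | 1 / κ < ‖x‖},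
            ENNReal.ofReal ((Real.log (κ * ‖x‖) + 1 / 2) / ρ) ∂ν) +
          (∫⁻ x in {x : EuclideanSpace ℝ (Fin d) | ‖x‖ ≤ 1 / κ},
            ENNReal.ofReal (κ ^ 2 * ‖x‖ ^ 2 / (2 * ρ)) ∂ν) < ⊤ := by
  classical
  have hκ0 : (0:ℝ) < κ := lt_of_lt_of_le one_pos hκ
  haveI : SigmaFinite ν := levy_sigmaFinite ν hν0 hν2
  set E := EuclideanSpace ℝ (Fin d)
  set F : ℝ → E → ENNReal := fun s x =>
    ENNReal.ofReal (min 1 ((κ * ‖x‖) ^ 2 * Real.exp (-(2 * ρ) * s))) with hF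
  set g : E → ENNReal := fun x =>
    if 1 / κ < ‖x‖ then ENNReal.ofReal ((Real.log (κ * ‖x‖) + 1 / 2) / ρ)
    else ENNReal.ofReal (κ ^ 2 * ‖x‖ ^ 2 / (2 * ρ)) with hg
  have hS : MeasurableSet {x : E | 1 / κ < ‖x‖} :=
    measurableSet_lt measurable_const measurable_norm
  -- Step A: pointwise bound of the double integrand
  have stepA : (∫⁻ s in Set.Ioi (0 : ℝ), ∫⁻ x,
        ENNReal.ofReal
          (min 1 (‖Matrix.toEuclideanCLM (𝕜 := ℝ) (NormedSpace.exp (s • A)) x‖ ^ 2)) ∂ν)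
      ≤ ∫⁻ s in Set.Ioi (0 : ℝ), ∫⁻ x, F s x ∂ν := by
    refine lintegral_mono_ae ((ae_restrict_iff' measurableSet_Ioi).mpr (ae_of_all _ fun s hs => ?_))
    refine lintegral_mono fun x => ENNReal.ofReal_le_ofReal (min_le_min le_rfl ?_)
    have h1 : ‖Matrix.toEuclideanCLM (𝕜 := ℝ) (NormedSpace.exp (s • A)) x‖ ≤
        κ * Real.exp (-ρ * s) * ‖x‖ := by
      refine (ContinuousLinearMap.le_opNorm _ x).trans ?_
      exact mul_le_mul_of_nonneg_right (hbound s (le_of_lt hs)) (norm_nonneg x)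
    have h2 := pow_le_pow_left₀ (norm_nonneg _) h1 2
    refine h2.trans (le_of_eq ?_)
    rw [show -(2 * ρ) * s = -ρ * s + -ρ * s by ring, Real.exp_add]
    ring
  -- Step B: swap
  have hmeas : Measurable (Function.uncurry F) := by
    apply Measurable.ennreal_ofReal
    refine Measurable.min measurable_const ?_
    exact ((measurable_snd.norm.const_mul κ).pow_const 2).mul
      (Real.measurable_exp.comp (measurable_fst.const_mul (-(2 * ρ))))
  have stepB : ∫⁻ s in Set.Ioi (0 : ℝ), ∫⁻ x, F s x ∂ν
      = ∫⁻ x, (∫⁻ s in Set.Ioi (0 : ℝ), F s x) ∂ν := by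
    exact lintegral_lintegral_swap hmeas.aemeasurable
  -- Step C: per-x bound
  have stepC : ∀ x : E, ∫⁻ s in Set.Ioi (0 : ℝ), F s x ≤ g x := by
    intro x
    by_cases h : 1 / κ < ‖x‖
    · have hx0 : 0 < ‖x‖ := lt_trans (by positivity) h
      have hc1 : 1 < κ * ‖x‖ := by
        rw [div_lt_iff₀ hκ0] at h
        linarith [h]
      have hc0 : 0 < κ * ‖x‖ := by positivity
      have hs₀ : 0 ≤ Real.log (κ * ‖x‖) / ρ :=
        div_nonneg (Real.log_nonneg hc1.le) hρ.le
      refine (key_lintegral ρ (κ * ‖x‖) (Real.log (κ * ‖x‖) / ρ) hρ hs₀).trans (le_of_eq ?_)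
      have hexp : Real.exp (-(2 * ρ) * (Real.log (κ * ‖x‖) / ρ))
          = ((κ * ‖x‖)⁻¹) ^ 2 := by
        rw [show -(2 * ρ) * (Real.log (κ * ‖x‖) / ρ)
            = -Real.log (κ * ‖x‖) + -Real.log (κ * ‖x‖) by field_simp; ring,
          Real.exp_add, Real.exp_neg, Real.exp_log hc0]
        ring
      rw [hexp]
      have heq : (κ * ‖x‖) ^ 2 * ((κ * ‖x‖)⁻¹) ^ 2 / (2 * ρ) = 1 / (2 * ρ) := by
        field_simp
      rw [heq, ← ENNReal.ofReal_add hs₀ (by positivity)]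
      rw [hg]
      simp only [if_pos h]
      congr 1
      field_simp
    · have := key_lintegral ρ (κ * ‖x‖) 0 hρ le_rfl
      simp only [mul_zero, Real.exp_zero, mul_one, ENNReal.ofReal_zero, zero_add] at this
      refine this.trans (le_of_eq ?_)
      rw [hg]
      simp only [if_neg h]
      congr 1
      ring
  -- Step D: split the integral of g
  have hcomplS : {x : E | 1 / κ < ‖x‖}ᶜ = {x : E | ‖x‖ ≤ 1 / κ} := by
    ext x; simp [not_lt]
  have stepD : ∫⁻ x, g x ∂ν =
      (∫⁻ x in {x : E | 1 / κ < ‖x‖},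
          ENNReal.ofReal ((Real.log (κ * ‖x‖) + 1 / 2) / ρ) ∂ν) +
        ∫⁻ x in {x : E | ‖x‖ ≤ 1 / κ},
          ENNReal.ofReal (κ ^ 2 * ‖x‖ ^ 2 / (2 * ρ)) ∂ν := by
    rw [← lintegral_add_compl g hS, hcomplS]
    congr 1
    · refine setLIntegral_congr_fun hS (fun x hx => ?_)
      simp only [Set.mem_setOf_eq] at hx
      rw [hg]; simp only [if_pos hx]
    · refine setLIntegral_congr_fun (by rw [← hcomplS]; exact hS.compl)
        (fun x hx => ?_)
      rw [hg]; simp only [Set.mem_setOf_eq] at hx; simp only [if_neg (not_lt.mpr hx)]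
  -- Finiteness
  have hT2 : ν {x : E | 1 < ‖x‖} < ⊤ := meas_gt_lt_top ν hν2 one_pos
  have hI2 : (∫⁻ x in {x : E | ‖x‖ ≤ 1 / κ},
      ENNReal.ofReal (κ ^ 2 * ‖x‖ ^ 2 / (2 * ρ)) ∂ν) < ⊤ := by
    have hSc : MeasurableSet {x : E | ‖x‖ ≤ 1 / κ} := by
      rw [← hcomplS]; exact hS.compl
    have hpt : ∀ x : E, x ∈ {x : E | ‖x‖ ≤ 1 / κ} →
        ENNReal.ofReal (κ ^ 2 * ‖x‖ ^ 2 / (2 * ρ)) ≤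
          ENNReal.ofReal (κ ^ 2 / (2 * ρ)) * ENNReal.ofReal (min 1 (‖x‖ ^ 2)) := by
      intro x hx
      rw [← ENNReal.ofReal_mul (by positivity)]
      refine ENNReal.ofReal_le_ofReal ?_
      have hx1 : ‖x‖ ≤ 1 := le_trans hx (by rw [div_le_one hκ0]; exact hκ)
      have : min 1 (‖x‖ ^ 2) = ‖x‖ ^ 2 :=
        min_eq_right (by nlinarith [norm_nonneg x])
      rw [this]; ring_nf; exact le_refl _
    calc ∫⁻ x in {x : E | ‖x‖ ≤ 1 / κ}, ENNReal.ofReal (κ ^ 2 * ‖x‖ ^ 2 / (2 * ρ)) ∂ν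
        ≤ ∫⁻ x in {x : E | ‖x‖ ≤ 1 / κ},
            ENNReal.ofReal (κ ^ 2 / (2 * ρ)) * ENNReal.ofReal (min 1 (‖x‖ ^ 2)) ∂ν :=
          lintegral_mono_ae ((ae_restrict_iff' hSc).mpr (ae_of_all _ hpt))
      _ ≤ ∫⁻ x, ENNReal.ofReal (κ ^ 2 / (2 * ρ)) * ENNReal.ofReal (min 1 (‖x‖ ^ 2)) ∂ν :=
          setLIntegral_le_lintegral _ _
      _ = ENNReal.ofReal (κ ^ 2 / (2 * ρ)) * ∫⁻ x, ENNReal.ofReal (min 1 (‖x‖ ^ 2)) ∂ν :=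
          lintegral_const_mul' _ _ ENNReal.ofReal_ne_top
      _ < ⊤ := ENNReal.mul_lt_top ENNReal.ofReal_lt_top hν2
  have hI1 : (∫⁻ x in {x : E | 1 / κ < ‖x‖},
      ENNReal.ofReal ((Real.log (κ * ‖x‖) + 1 / 2) / ρ) ∂ν) < ⊤ := by
    set T1 : Set E := {x | 1 / κ < ‖x‖ ∧ ‖x‖ ≤ 1} with hT1def
    have hT1meas : MeasurableSet T1 :=
      (measurableSet_lt measurable_const measurable_norm).inter
        (measurableSet_le measurable_norm measurable_const)
    have hsub : {x : E | 1 / κ < ‖x‖} ⊆ T1 ∪ {x : E | 1 < ‖x‖} := by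
      intro x hx
      rcases le_or_gt ‖x‖ 1 with h | h
      · exact Or.inl ⟨hx, h⟩
      · exact Or.inr h
    have hνT1 : ν T1 < ⊤ := by
      refine lt_of_le_of_lt (measure_mono fun x hx => hx.1) ?_
      exact meas_gt_lt_top ν hν2 (by positivity)
    have hbT1 : (∫⁻ x in T1, ENNReal.ofReal ((Real.log (κ * ‖x‖) + 1 / 2) / ρ) ∂ν) < ⊤ := by
      have hpt : ∀ x : E, x ∈ T1 →
          ENNReal.ofReal ((Real.log (κ * ‖x‖) + 1 / 2) / ρ) ≤
            ENNReal.ofReal ((Real.log κ + 1 / 2) / ρ) := by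
        intro x hx
        refine ENNReal.ofReal_le_ofReal ?_
        have hx0 : (0:ℝ) < ‖x‖ := lt_trans (by positivity) hx.1
        have hlog : Real.log (κ * ‖x‖) ≤ Real.log κ :=
          Real.log_le_log (by positivity) (by nlinarith [hx.2])
        gcongr
      calc (∫⁻ x in T1, ENNReal.ofReal ((Real.log (κ * ‖x‖) + 1 / 2) / ρ) ∂ν)
          ≤ ∫⁻ _ in T1, ENNReal.ofReal ((Real.log κ + 1 / 2) / ρ) ∂ν :=
            lintegral_mono_ae ((ae_restrict_iff' hT1meas).mpr (ae_of_all _ hpt))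
        _ = ENNReal.ofReal ((Real.log κ + 1 / 2) / ρ) * ν T1 := setLIntegral_const _ _
        _ < ⊤ := ENNReal.mul_lt_top ENNReal.ofReal_lt_top hνT1
    have hbT2 : (∫⁻ x in {x : E | 1 < ‖x‖},
        ENNReal.ofReal ((Real.log (κ * ‖x‖) + 1 / 2) / ρ) ∂ν) < ⊤ := by
      have hT2meas : MeasurableSet {x : E | 1 < ‖x‖} :=
        measurableSet_lt measurable_const measurable_norm
      have hpt : ∀ x : E, x ∈ {x : E | 1 < ‖x‖} →
          ENNReal.ofReal ((Real.log (κ * ‖x‖) + 1 / 2) / ρ) ≤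
            ENNReal.ofReal ((Real.log κ + 1 / 2) / ρ) +
              ENNReal.ofReal (1 / ρ) * ENNReal.ofReal (Real.log ‖x‖) := by
        intro x hx
        simp only [Set.mem_setOf_eq] at hx
        have hx0 : (0:ℝ) < ‖x‖ := lt_trans one_pos hx
        have hlog : Real.log (κ * ‖x‖) = Real.log κ + Real.log ‖x‖ :=
          Real.log_mul hκ0.ne' hx0.ne'
        have hlogx : 0 ≤ Real.log ‖x‖ := Real.log_nonneg hx.le
        have hlogκ : 0 ≤ Real.log κ := Real.log_nonneg hκ
        rw [← ENNReal.ofReal_mul (by positivity), ← ENNReal.ofReal_add (by positivity)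
          (by positivity)]
        refine ENNReal.ofReal_le_ofReal (le_of_eq ?_)
        rw [hlog]; field_simp; ring
      calc (∫⁻ x in {x : E | 1 < ‖x‖}, ENNReal.ofReal ((Real.log (κ * ‖x‖) + 1 / 2) / ρ) ∂ν)
          ≤ ∫⁻ x in {x : E | 1 < ‖x‖},
              (ENNReal.ofReal ((Real.log κ + 1 / 2) / ρ) +
                ENNReal.ofReal (1 / ρ) * ENNReal.ofReal (Real.log ‖x‖)) ∂ν :=
            lintegral_mono_ae ((ae_restrict_iff' hT2meas).mpr (ae_of_all _ hpt))
        _ = ENNReal.ofReal ((Real.log κ + 1 / 2) / ρ) * ν {x : E | 1 < ‖x‖} +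
              ENNReal.ofReal (1 / ρ) *
                ∫⁻ x in {x : E | 1 < ‖x‖}, ENNReal.ofReal (Real.log ‖x‖) ∂ν := by
            rw [lintegral_add_left measurable_const, setLIntegral_const,
              lintegral_const_mul' _ _ ENNReal.ofReal_ne_top]
        _ < ⊤ := ENNReal.add_lt_top.mpr
            ⟨ENNReal.mul_lt_top ENNReal.ofReal_lt_top hT2,
             ENNReal.mul_lt_top ENNReal.ofReal_lt_top hνlog⟩
    calc (∫⁻ x in {x : E | 1 / κ < ‖x‖},
        ENNReal.ofReal ((Real.log (κ * ‖x‖) + 1 / 2) / ρ) ∂ν)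
        ≤ ∫⁻ x in T1 ∪ {x : E | 1 < ‖x‖},
            ENNReal.ofReal ((Real.log (κ * ‖x‖) + 1 / 2) / ρ) ∂ν :=
          lintegral_mono_set hsub
      _ ≤ (∫⁻ x in T1, ENNReal.ofReal ((Real.log (κ * ‖x‖) + 1 / 2) / ρ) ∂ν) +
            ∫⁻ x in {x : E | 1 < ‖x‖},
              ENNReal.ofReal ((Real.log (κ * ‖x‖) + 1 / 2) / ρ) ∂ν :=
          lintegral_union_le _ _ _
      _ < ⊤ := ENNReal.add_lt_top.mpr ⟨hbT1, hbT2⟩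
  constructor
  · calc (∫⁻ s in Set.Ioi (0 : ℝ), ∫⁻ x,
        ENNReal.ofReal
          (min 1 (‖Matrix.toEuclideanCLM (𝕜 := ℝ) (NormedSpace.exp (s • A)) x‖ ^ 2)) ∂ν)
        ≤ ∫⁻ s in Set.Ioi (0 : ℝ), ∫⁻ x, F s x ∂ν := stepA
      _ = ∫⁻ x, (∫⁻ s in Set.Ioi (0 : ℝ), F s x) ∂ν := stepB
      _ ≤ ∫⁻ x, g x ∂ν := lintegral_mono stepC
      _ = _ := stepD
  · exact ENNReal.add_lt_top.mpr ⟨hI1, hI2⟩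
end
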